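/- For α, β > −1 and integers k, l ≥ 0 define b_{k,l}^{α,β} = ( ((α+β)/2 + 1)_{k+l} · ((α+β+3)/2)_{k+l} ) / ( (α+1)_k (β+1)_l k! l! ), where (x)_k is the Pochhammer symbol. Then all b_{k,l}^{α,β} are strictly positive; for every γ > max{α, β} one has sup_{k,l ≥ 0} b_{k,l}^{α,β} / b_{k,l}^{γ,γ} < ∞; and for every η with −1 < η < min{α, β} one has inf_{k,l ≥ 0} b_{k,l}^{α,β} / b_{k,l}^{η,η} > 0. -/

import Mathlib

open Finset

private lemma prodPos {x : ℝ} (hx : 0 < x) (n : ℕ) : 0 < ∏ j ∈ range n, (x + (j:ℝ)) :=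
  prod_pos fun j _ => by positivity

private lemma sum_inv_mono_base {m p : ℝ} (hm : 0 < m) (hmp : m ≤ p) (n : ℕ) :
    ∑ j ∈ range n, 1/(p+(j:ℝ)) ≤ ∑ j ∈ range n, 1/(m+(j:ℝ)) :=
  sum_le_sum fun j _ => by
    have h1 : 0 < m + (j:ℝ) := by positivity
    exact one_div_le_one_div_of_le h1 (by linarith)

private lemma sum_inv_mono_n {m : ℝ} (hm : 0 < m) {n n' : ℕ} (h : n ≤ n') :
    ∑ j ∈ range n, 1/(m+(j:ℝ)) ≤ ∑ j ∈ range n', 1/(m+(j:ℝ)) :=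
  sum_le_sum_of_subset_of_nonneg (range_subset_range.2 h) (fun j _ _ => by positivity)

private lemma sum_inv_sq {m : ℝ} (hm : 0 < m) (n : ℕ) :
    ∑ j ∈ range n, 1/(m+(j:ℝ))^2 ≤ 1/m + 1/m^2 := by
  have key : ∀ n : ℕ, ∑ j ∈ range n, 1/(m+(j:ℝ))^2 ≤ (1+1/m)*(1/m - 1/(m+(n:ℝ))) := by
    intro n
    induction n with
    | zero => simp
    | succ n ih =>
      rw [sum_range_succ]
      have h1 : 0 < m + (n:ℝ) := by positivity
      have h2 : 0 < m + (n:ℝ) + 1 := by linarith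
      have step : 1/(m+(n:ℝ))^2 ≤ (1+1/m)*(1/(m+(n:ℝ)) - 1/(m+(n:ℝ)+1)) := by
        rw [← sub_nonneg]
        have expand : (1+1/m)*(1/(m+(n:ℝ)) - 1/(m+(n:ℝ)+1)) - 1/(m+(n:ℝ))^2
            = (n:ℝ) / (m * (m+(n:ℝ))^2 * (m+(n:ℝ)+1)) := by
          field_simp
          ring
        rw [expand]
        positivity
      push_cast
      have comb : (1+1/m)*(1/m - 1/(m+(n:ℝ))) + (1+1/m)*(1/(m+(n:ℝ)) - 1/(m+(n:ℝ)+1))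
          = (1+1/m)*(1/m - 1/(m+((n:ℝ)+1))) := by ring
      linarith
  calc ∑ j ∈ range n, 1/(m+(j:ℝ))^2 ≤ (1+1/m)*(1/m - 1/(m+(n:ℝ))) := key n
    _ ≤ 1/m + 1/m^2 := by
        have h1 : 0 ≤ 1/(m+(n:ℝ)) := by positivity
        have h3 : 0 ≤ (1+1/m)*(1/(m+(n:ℝ))) := by positivity
        have e : (1+1/m)*(1/m - 1/(m+(n:ℝ))) = (1/m + 1/m^2) - (1+1/m)*(1/(m+(n:ℝ))) := by
          ring
        linarith

private lemma sum_inv_diff {m q : ℝ} (hm : 0 < m) (hmq : m ≤ q) (n : ℕ) :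
    ∑ j ∈ range n, 1/(m+(j:ℝ)) - ∑ j ∈ range n, 1/(q+(j:ℝ)) ≤ (q-m)*(1/m + 1/m^2) := by
  rw [← sum_sub_distrib]
  calc ∑ j ∈ range n, (1/(m+(j:ℝ)) - 1/(q+(j:ℝ)))
      ≤ ∑ j ∈ range n, (q-m)*(1/(m+(j:ℝ))^2) := by
        refine sum_le_sum fun j _ => ?_
        have h1 : 0 < m + (j:ℝ) := by positivity
        have h2 : 0 < q + (j:ℝ) := by linarith
        have e : 1/(m+(j:ℝ)) - 1/(q+(j:ℝ)) = (q-m)/((m+(j:ℝ))*(q+(j:ℝ))) := by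
          field_simp
          ring
        rw [e, mul_one_div]
        apply div_le_div_of_nonneg_left (by linarith) (by positivity)
        nlinarith
    _ = (q-m) * ∑ j ∈ range n, 1/(m+(j:ℝ))^2 := by rw [mul_sum]
    _ ≤ (q-m)*(1/m + 1/m^2) :=
        mul_le_mul_of_nonneg_left (sum_inv_sq hm n) (by linarith)

private lemma prod_le_exp {x y : ℝ} (hx : 0 < x) (hxy : x ≤ y) (n : ℕ) :
    ∏ j ∈ range n, (y+(j:ℝ))/(x+(j:ℝ)) ≤ Real.exp ((y-x) * ∑ j ∈ range n, 1/(x+(j:ℝ))) := by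
  rw [mul_sum]
  rw [Real.exp_sum]
  refine prod_le_prod (fun j _ => ?_) (fun j _ => ?_)
  · have h1 : 0 < x + (j:ℝ) := by positivity
    have h2 : 0 < y + (j:ℝ) := by linarith
    positivity
  have h1 : 0 < x + (j:ℝ) := by positivity
  have e : (y+(j:ℝ))/(x+(j:ℝ)) = (y-x)*(1/(x+(j:ℝ))) + 1 := by
    field_simp
    ring
  rw [e]
  exact Real.add_one_le_exp _

private lemma exp_le_prod {x y : ℝ} (hx : 0 < x) (hxy : x ≤ y) (n : ℕ) :
    Real.exp ((y-x) * ∑ j ∈ range n, 1/(y+(j:ℝ))) ≤ ∏ j ∈ range n, (y+(j:ℝ))/(x+(j:ℝ)) := by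
  rw [mul_sum, Real.exp_sum]
  refine prod_le_prod (fun j _ => (Real.exp_pos _).le) (fun j _ => ?_)
  have h1 : 0 < x + (j:ℝ) := by positivity
  have h2 : 0 < y + (j:ℝ) := by linarith
  have key : (x+(j:ℝ))/(y+(j:ℝ)) ≤ Real.exp (-((y-x)*(1/(y+(j:ℝ))))) := by
    have e : (x+(j:ℝ))/(y+(j:ℝ)) = -((y-x)*(1/(y+(j:ℝ)))) + 1 := by field_simp; ring
    rw [e]
    exact Real.add_one_le_exp _
  rw [Real.exp_neg] at key
  have h3 : 0 < (x+(j:ℝ))/(y+(j:ℝ)) := by positivity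
  calc Real.exp ((y-x)*(1/(y+(j:ℝ)))) = ((Real.exp ((y-x)*(1/(y+(j:ℝ)))))⁻¹)⁻¹ := by
        rw [inv_inv]
    _ ≤ ((x+(j:ℝ))/(y+(j:ℝ)))⁻¹ := by
        apply inv_anti₀ h3 key
    _ = (y+(j:ℝ))/(x+(j:ℝ)) := by rw [inv_div]

private lemma master {p₁ q₁ p₂ q₂ p₃ q₃ p₄ q₄ : ℝ}
    (hp₁ : 0 < p₁) (hp₂ : 0 < p₂) (hp₃ : 0 < p₃) (hp₄ : 0 < p₄)
    (h₁ : p₁ ≤ q₁) (h₂ : p₂ ≤ q₂) (h₃ : p₃ ≤ q₃) (h₄ : p₄ ≤ q₄)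
    (hsum : (q₁-p₁)+(q₂-p₂) = (q₃-p₃)+(q₄-p₄)) :
    ∃ C : ℝ, 0 < C ∧ ∀ k l : ℕ,
      (∏ j ∈ range k, (q₁+(j:ℝ))/(p₁+(j:ℝ))) * (∏ j ∈ range l, (q₂+(j:ℝ))/(p₂+(j:ℝ)))
      ≤ C * ((∏ j ∈ range (k+l), (q₃+(j:ℝ))/(p₃+(j:ℝ))) *
             (∏ j ∈ range (k+l), (q₄+(j:ℝ))/(p₄+(j:ℝ)))) := by
  obtain ⟨m, hm0, hmp₁, hmp₂, hmp₃, hmp₄⟩ :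
      ∃ m : ℝ, 0 < m ∧ m ≤ p₁ ∧ m ≤ p₂ ∧ m ≤ p₃ ∧ m ≤ p₄ :=
    ⟨min (min p₁ p₂) (min p₃ p₄), lt_min (lt_min hp₁ hp₂) (lt_min hp₃ hp₄),
      le_trans (min_le_left _ _) (min_le_left _ _),
      le_trans (min_le_left _ _) (min_le_right _ _),
      le_trans (min_le_right _ _) (min_le_left _ _),
      le_trans (min_le_right _ _) (min_le_right _ _)⟩
  have hmq₃ : m ≤ q₃ := le_trans hmp₃ h₃
  have hmq₄ : m ≤ q₄ := le_trans hmp₄ h₄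
  refine ⟨Real.exp ((q₃-p₃)*((q₃-m)*(1/m + 1/m^2)) + (q₄-p₄)*((q₄-m)*(1/m + 1/m^2))),
    Real.exp_pos _, fun k l => ?_⟩
  have L1 : (∏ j ∈ range k, (q₁+(j:ℝ))/(p₁+(j:ℝ)))
      ≤ Real.exp ((q₁-p₁) * ∑ j ∈ range (k+l), 1/(m+(j:ℝ))) := by
    refine le_trans (prod_le_exp hp₁ h₁ k) (Real.exp_le_exp.2 ?_)
    refine mul_le_mul_of_nonneg_left ?_ (by linarith)
    exact le_trans (sum_inv_mono_base hm0 hmp₁ k) (sum_inv_mono_n hm0 (Nat.le_add_right k l))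
  have L2 : (∏ j ∈ range l, (q₂+(j:ℝ))/(p₂+(j:ℝ)))
      ≤ Real.exp ((q₂-p₂) * ∑ j ∈ range (k+l), 1/(m+(j:ℝ))) := by
    refine le_trans (prod_le_exp hp₂ h₂ l) (Real.exp_le_exp.2 ?_)
    refine mul_le_mul_of_nonneg_left ?_ (by linarith)
    exact le_trans (sum_inv_mono_base hm0 hmp₂ l) (sum_inv_mono_n hm0 (Nat.le_add_left l k))
  have R3 : Real.exp ((q₃-p₃) * (∑ j ∈ range (k+l), 1/(m+(j:ℝ)))
        - (q₃-p₃)*((q₃-m)*(1/m + 1/m^2)))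
      ≤ ∏ j ∈ range (k+l), (q₃+(j:ℝ))/(p₃+(j:ℝ)) := by
    refine le_trans (Real.exp_le_exp.2 ?_) (exp_le_prod hp₃ h₃ (k+l))
    have h' := mul_le_mul_of_nonneg_left (sum_inv_diff hm0 hmq₃ (k+l))
      (show (0:ℝ) ≤ q₃-p₃ by linarith)
    nlinarith [h']
  have R4 : Real.exp ((q₄-p₄) * (∑ j ∈ range (k+l), 1/(m+(j:ℝ)))
        - (q₄-p₄)*((q₄-m)*(1/m + 1/m^2)))
      ≤ ∏ j ∈ range (k+l), (q₄+(j:ℝ))/(p₄+(j:ℝ)) := by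
    refine le_trans (Real.exp_le_exp.2 ?_) (exp_le_prod hp₄ h₄ (k+l))
    have h' := mul_le_mul_of_nonneg_left (sum_inv_diff hm0 hmq₄ (k+l))
      (show (0:ℝ) ≤ q₄-p₄ by linarith)
    nlinarith [h']
  calc (∏ j ∈ range k, (q₁+(j:ℝ))/(p₁+(j:ℝ))) * (∏ j ∈ range l, (q₂+(j:ℝ))/(p₂+(j:ℝ)))
      ≤ Real.exp ((q₁-p₁) * ∑ j ∈ range (k+l), 1/(m+(j:ℝ)))
        * Real.exp ((q₂-p₂) * ∑ j ∈ range (k+l), 1/(m+(j:ℝ))) :=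
        mul_le_mul L1 L2 (prod_nonneg fun j _ => by
          have ha : 0 < p₂ + (j:ℝ) := by positivity
          have hb : 0 < q₂ + (j:ℝ) := by linarith
          positivity) (Real.exp_pos _).le
    _ = Real.exp ((q₃-p₃)*((q₃-m)*(1/m + 1/m^2)) + (q₄-p₄)*((q₄-m)*(1/m + 1/m^2))) *
        (Real.exp ((q₃-p₃) * (∑ j ∈ range (k+l), 1/(m+(j:ℝ)))
            - (q₃-p₃)*((q₃-m)*(1/m + 1/m^2)))
         * Real.exp ((q₄-p₄) * (∑ j ∈ range (k+l), 1/(m+(j:ℝ)))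
            - (q₄-p₄)*((q₄-m)*(1/m + 1/m^2)))) := by
        rw [← Real.exp_add, ← Real.exp_add, ← Real.exp_add]
        congr 1
        have hs2 : ((q₁-p₁)+(q₂-p₂)) * (∑ j ∈ range (k+l), 1/(m+(j:ℝ)))
            = ((q₃-p₃)+(q₄-p₄)) * (∑ j ∈ range (k+l), 1/(m+(j:ℝ))) := by rw [hsum]
        nlinarith [hs2]
    _ ≤ Real.exp ((q₃-p₃)*((q₃-m)*(1/m + 1/m^2)) + (q₄-p₄)*((q₄-m)*(1/m + 1/m^2))) *
        ((∏ j ∈ range (k+l), (q₃+(j:ℝ))/(p₃+(j:ℝ))) *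
         (∏ j ∈ range (k+l), (q₄+(j:ℝ))/(p₄+(j:ℝ)))) := by
        refine mul_le_mul_of_nonneg_left ?_ (Real.exp_pos _).le
        exact mul_le_mul R3 R4 (Real.exp_pos _).le (le_trans (Real.exp_pos _).le R3)

private lemma evalProd (x : ℝ) (n : ℕ) :
    (ascPochhammer ℝ n).eval x = ∏ j ∈ range n, (x + (j:ℝ)) := by
  induction n with
  | zero => simp
  | succ n ih => rw [ascPochhammer_succ_eval, ih, prod_range_succ]

/-- `b_{k,l}^{α,β} = ((α+β)/2+1)_{k+l} ((α+β+3)/2)_{k+l} / ((α+1)_k (β+1)_l k! l!)`,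
where `(x)_k` is the Pochhammer symbol. -/
noncomputable def bCoef (α β : ℝ) (k l : ℕ) : ℝ :=
  ((ascPochhammer ℝ (k + l)).eval ((α + β) / 2 + 1) *
    (ascPochhammer ℝ (k + l)).eval ((α + β + 3) / 2)) /
    ((ascPochhammer ℝ k).eval (α + 1) * (ascPochhammer ℝ l).eval (β + 1) *
      k.factorial * l.factorial)

private lemma bCoef_pos' {a b : ℝ} (ha : -1 < a) (hb : -1 < b) (k l : ℕ) :
    0 < bCoef a b k l := by
  have h1 : (0:ℝ) < (a+b)/2 + 1 := by linarith
  have h2 : (0:ℝ) < (a+b+3)/2 := by linarith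
  have h3 : (0:ℝ) < a + 1 := by linarith
  have h4 : (0:ℝ) < b + 1 := by linarith
  unfold bCoef
  apply div_pos (mul_pos (ascPochhammer_pos _ _ h1) (ascPochhammer_pos _ _ h2))
  apply mul_pos
  apply mul_pos
  exact mul_pos (ascPochhammer_pos _ _ h3) (ascPochhammer_pos _ _ h4)
  · exact_mod_cast Nat.factorial_pos k
  · exact_mod_cast Nat.factorial_pos l

private lemma bCoef_div_bounded {a b c d : ℝ} (ha : -1 < a) (hb : -1 < b)
    (hac : a ≤ c) (hbd : b ≤ d) :
    ∃ C : ℝ, 0 < C ∧ ∀ k l : ℕ, bCoef a b k l / bCoef c d k l ≤ C := by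
  have hp₁ : (0:ℝ) < a + 1 := by linarith
  have hp₂ : (0:ℝ) < b + 1 := by linarith
  have hp₃ : (0:ℝ) < (a+b)/2 + 1 := by linarith
  have hp₄ : (0:ℝ) < (a+b+3)/2 := by linarith
  have hq₃ : (0:ℝ) < (c+d)/2 + 1 := by linarith
  have hq₄ : (0:ℝ) < (c+d+3)/2 := by linarith
  obtain ⟨C, hC, hCle⟩ := master hp₁ hp₂ hp₃ hp₄
    (show a+1 ≤ c+1 by linarith) (show b+1 ≤ d+1 by linarith)
    (show (a+b)/2+1 ≤ (c+d)/2+1 by linarith) (show (a+b+3)/2 ≤ (c+d+3)/2 by linarith)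
    (by ring)
  refine ⟨C, hC, fun k l => ?_⟩
  have key := hCle k l
  have hA1 := prodPos hp₁ k
  have hA2 := prodPos hp₂ l
  have hA3 := prodPos hp₃ (k+l)
  have hA4 := prodPos hp₄ (k+l)
  have hC1 := prodPos (show (0:ℝ) < c+1 by linarith) k
  have hC2 := prodPos (show (0:ℝ) < d+1 by linarith) l
  have hC3 := prodPos hq₃ (k+l)
  have hC4 := prodPos hq₄ (k+l)
  have hk : (0:ℝ) < (k.factorial : ℝ) := by exact_mod_cast Nat.factorial_pos k
  have hl : (0:ℝ) < (l.factorial : ℝ) := by exact_mod_cast Nat.factorial_pos l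
  have e : bCoef a b k l / bCoef c d k l =
      ((∏ j ∈ range k, (c+1+(j:ℝ))/(a+1+(j:ℝ))) *
        (∏ j ∈ range l, (d+1+(j:ℝ))/(b+1+(j:ℝ))))
      / ((∏ j ∈ range (k+l), ((c+d)/2+1+(j:ℝ))/((a+b)/2+1+(j:ℝ))) *
         (∏ j ∈ range (k+l), ((c+d+3)/2+(j:ℝ))/((a+b+3)/2+(j:ℝ)))) := by
    have e2 : ∀ A1 A2 A3 A4 B1 B2 B3 B4 F G : ℝ, A1 ≠ 0 → A2 ≠ 0 → A3 ≠ 0 → A4 ≠ 0 →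
        B1 ≠ 0 → B2 ≠ 0 → B3 ≠ 0 → B4 ≠ 0 → F ≠ 0 → G ≠ 0 →
        (A3*A4)/(A1*A2*F*G) / ((B3*B4)/(B1*B2*F*G))
          = ((B1/A1)*(B2/A2))/((B3/A3)*(B4/A4)) := by
      intro A1 A2 A3 A4 B1 B2 B3 B4 F G h1 h2 h3 h4 g1 g2 g3 g4 hF hG
      field_simp
    unfold bCoef
    simp only [evalProd, prod_div_distrib]
    exact e2 _ _ _ _ _ _ _ _ _ _ (ne_of_gt hA1) (ne_of_gt hA2) (ne_of_gt hA3) (ne_of_gt hA4)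
      (ne_of_gt hC1) (ne_of_gt hC2) (ne_of_gt hC3) (ne_of_gt hC4)
      (ne_of_gt hk) (ne_of_gt hl)
  rw [e]
  have hY : (0:ℝ) < (∏ j ∈ range (k+l), ((c+d)/2+1+(j:ℝ))/((a+b)/2+1+(j:ℝ))) *
      (∏ j ∈ range (k+l), ((c+d+3)/2+(j:ℝ))/((a+b+3)/2+(j:ℝ))) := by
    apply mul_pos <;> refine prod_pos fun j _ => ?_
    · have hx : (0:ℝ) < (a+b)/2+1+(j:ℝ) := by positivity
      have hy : (0:ℝ) < (c+d)/2+1+(j:ℝ) := by positivity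
      positivity
    · have hx : (0:ℝ) < (a+b+3)/2+(j:ℝ) := by positivity
      have hy : (0:ℝ) < (c+d+3)/2+(j:ℝ) := by positivity
      positivity
  exact (div_le_iff₀ hY).2 key

theorem bCoef_pos_ratio_bounded (α β : ℝ) (hα : -1 < α) (hβ : -1 < β) :
    (∀ k l : ℕ, 0 < bCoef α β k l) ∧
    (∀ γ : ℝ, max α β < γ →
      BddAbove (Set.range fun p : ℕ × ℕ => bCoef α β p.1 p.2 / bCoef γ γ p.1 p.2)) ∧
    ∀ η : ℝ, -1 < η → η < min α β →
      ∃ c : ℝ, 0 < c ∧ ∀ k l : ℕ, c ≤ bCoef α β k l / bCoef η η k l := by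
  refine ⟨fun k l => bCoef_pos' hα hβ k l, fun γ hγ => ?_, fun η hη hγ => ?_⟩
  · obtain ⟨C, hC, h⟩ := bCoef_div_bounded hα hβ
      (le_of_lt (lt_of_le_of_lt (le_max_left α β) hγ))
      (le_of_lt (lt_of_le_of_lt (le_max_right α β) hγ))
    exact ⟨C, by rintro x ⟨p, rfl⟩; exact h p.1 p.2⟩
  · have hηα : η ≤ α := le_of_lt (lt_of_lt_of_le hγ (min_le_left α β))
    have hηβ : η ≤ β := le_of_lt (lt_of_lt_of_le hγ (min_le_right α β))
    obtain ⟨C, hC, h⟩ := bCoef_div_bounded hη hη hηα hηβ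
    refine ⟨1/C, by positivity, fun k l => ?_⟩
    have hu : 0 < bCoef η η k l := bCoef_pos' hη hη k l
    have hv : 0 < bCoef α β k l := bCoef_pos' hα hβ k l
    have h2 : 1/C ≤ 1/(bCoef η η k l / bCoef α β k l) :=
      one_div_le_one_div_of_le (div_pos hu hv) (h k l)
    rwa [one_div_div] at h2
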